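/- Let H be an n×n real symmetric matrix, g ∈ ℝⁿ, f₀ ∈ ℝ, σ > 0 and r > 0, and set λ̂ = σr. Let T(s) = f₀ + gᵀs + (1/2)sᵀHs. If s ∈ ℝⁿ satisfies (H + λ̂I)s = −g and sᵀ(H + λ̂I)s > 0, then T(0) − T(s) > (1/2)σr‖s‖². -/

import Mathlib

open Matrix

/-- Decrease in the Taylor-series model for the regularized Newton step:
if `λ̂ = σr`, `(H + λ̂I)s = -g` and `sᵀ(H + λ̂I)s > 0`, then
`T(0) - T(s) > (1/2)σr‖s‖²`, where `T(s) = f₀ + gᵀs + (1/2)sᵀHs`. -/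
theorem taylor_decrease_regularized_newton_step
    (n : ℕ) (H : Matrix (Fin n) (Fin n) ℝ) (hH : H.IsSymm)
    (g : EuclideanSpace ℝ (Fin n)) (f₀ σ r : ℝ) (hσ : 0 < σ) (hr : 0 < r)
    (T : EuclideanSpace ℝ (Fin n) → ℝ)
    (hT : ∀ s : EuclideanSpace ℝ (Fin n),
      T s = f₀ + g ⬝ᵥ s + (1 / 2) * (s ⬝ᵥ H.mulVec s))
    (s : EuclideanSpace ℝ (Fin n))
    (hs : (H + (σ * r) • (1 : Matrix (Fin n) (Fin n) ℝ)).mulVec s = -g)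
    (hcurv : 0 < s ⬝ᵥ (H + (σ * r) • (1 : Matrix (Fin n) (Fin n) ℝ)).mulVec s) :
    T 0 - T s > (1 / 2) * σ * r * ‖s‖ ^ 2 := by
  have hm : (H + (σ * r) • (1 : Matrix (Fin n) (Fin n) ℝ)).mulVec s
      = H.mulVec s + (σ * r) • (fun i => s i : Fin n → ℝ) := by
    rw [add_mulVec, smul_mulVec, one_mulVec]
  have hnorm : (fun i => s i : Fin n → ℝ) ⬝ᵥ s = ‖s‖ ^ 2 := by
    rw [← real_inner_self_eq_norm_sq]
    simp [PiLp.inner_apply, dotProduct, mul_comm]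
    rw [EuclideanSpace.norm_eq, Real.sq_sqrt (Finset.sum_nonneg fun i _ => by positivity)]
    exact Finset.sum_congr rfl fun i _ => by rw [Real.norm_eq_abs, sq_abs, sq]
  have hg : g ⬝ᵥ s = -(s ⬝ᵥ H.mulVec s) - (σ * r) * ‖s‖ ^ 2 := by
    have h1 : g ⬝ᵥ s = (-((H + (σ * r) • (1 : Matrix (Fin n) (Fin n) ℝ)).mulVec s)) ⬝ᵥ s := by
      rw [hs, neg_neg]
    rw [h1, hm, neg_dotProduct, add_dotProduct, smul_dotProduct,
      dotProduct_comm (H.mulVec s), hnorm, smul_eq_mul]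
    ring
  have hcurv' : 0 < s ⬝ᵥ H.mulVec s + (σ * r) * ‖s‖ ^ 2 := by
    rw [hm] at hcurv
    simpa [dotProduct_add, dotProduct_smul, smul_eq_mul, hnorm] using hcurv
  rw [hT 0, hT s]
  have h0 : g ⬝ᵥ (0 : EuclideanSpace ℝ (Fin n)) = 0 := by
    simp [show ((0 : EuclideanSpace ℝ (Fin n)) : Fin n → ℝ) = 0 from rfl]
  have h0' : (0 : EuclideanSpace ℝ (Fin n)) ⬝ᵥ H.mulVec (0 : EuclideanSpace ℝ (Fin n)) = 0 := by
    simp [show ((0 : EuclideanSpace ℝ (Fin n)) : Fin n → ℝ) = 0 from rfl]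
  rw [h0, h0', hg]
  nlinarith [hcurv']
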